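/- arXiv:1911.00937 — 5 statements merged into one kernel-verified Lean document; each statement's English description precedes it below -/
import Mathlib

section
/- For every rank tuple r, the set 𝒞(r) is compact and path-connected. -/
open Matrix

def IsSymProj (n : ℕ) (P : Matrix (Fin n) (Fin n) ℝ) : Prop :=
  P * P = P ∧ Pᵀ = P

noncomputable def Aker (n K : ℕ) (P : Fin (K-1) → Matrix (Fin n) (Fin n) ℝ)
    (H : Matrix (Fin n) (Fin n) ℝ) : Fin K → Matrix (Fin n) (Fin n) ℝ :=
  fun j => ∑ δ ∈ Finset.univ.filter
      (fun δ : Fin (K-1) → Bool => (∑ i, (if δ i then 1 else 0)) = (j : ℕ)),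
    H * ((List.finRange (K-1)).map
      (fun i => if δ i then (1 : Matrix (Fin n) (Fin n) ℝ) - P i else P i)).prod

def SOCK (n K : ℕ) (r : Fin (K-1) → ℕ) : Set (Fin K → Matrix (Fin n) (Fin n) ℝ) :=
  {A | ∃ P H, (∀ i, IsSymProj n (P i) ∧ (P i).rank = r i) ∧
    Hᵀ * H = 1 ∧ H.det = 1 ∧ A = Aker n K P H}


namespace SockAux

variable {n : ℕ}

def Oset (n : ℕ) : Set (Matrix (Fin n) (Fin n) ℝ) := {H | Hᵀ * H = 1}
def SOset (n : ℕ) : Set (Matrix (Fin n) (Fin n) ℝ) := {H | Hᵀ * H = 1 ∧ H.det = 1}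

lemma entry_mem_Icc {n : ℕ} {H : Matrix (Fin n) (Fin n) ℝ} (h : Hᵀ * H = 1)
    (i j : Fin n) : H i j ∈ Set.Icc (-1 : ℝ) 1 := by
  have h1 : ∑ k, H k j * H k j = 1 := by
    have := congrFun (congrFun h j) j
    simpa [Matrix.mul_apply, Matrix.transpose_apply, Matrix.one_apply] using this
  have h2 : H i j * H i j ≤ 1 := by
    rw [← h1]
    exact Finset.single_le_sum (fun k _ => mul_self_nonneg (H k j)) (Finset.mem_univ i)
  constructor
  · nlinarith
  · nlinarith

lemma isCompact_SOset (n : ℕ) : IsCompact (SOset n) := by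
  have hbox : IsCompact {M : Matrix (Fin n) (Fin n) ℝ | ∀ i j, M i j ∈ Set.Icc (-1:ℝ) 1} := by
    have : IsCompact (Set.univ.pi fun _ : Fin n => (Set.univ.pi fun _ : Fin n => Set.Icc (-1:ℝ) 1)) :=
      isCompact_univ_pi (fun i => isCompact_univ_pi fun j => isCompact_Icc)
    suffices key : {M : Matrix (Fin n) (Fin n) ℝ | ∀ i j, M i j ∈ Set.Icc (-1:ℝ) 1} =
        Set.univ.pi fun _ : Fin n => (Set.univ.pi fun _ : Fin n => Set.Icc (-1:ℝ) 1) by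
      rw [key]; exact this
    ext M
    constructor
    · intro h
      exact fun i _ j _ => h i j
    · intro h i j
      exact h i (Set.mem_univ i) j (Set.mem_univ j)
  apply hbox.of_isClosed_subset
  · apply IsClosed.inter
    · exact isClosed_eq (continuous_id.matrix_transpose.matrix_mul continuous_id) continuous_const
    · exact isClosed_eq (continuous_id.matrix_det) continuous_const
  · rintro H ⟨h1, _⟩ 
    exact fun i j => entry_mem_Icc h1 i j


lemma mulVec_dot {Q : Matrix (Fin n) (Fin n) ℝ} (hQ : Qᵀ * Q = 1) (x y : Fin n → ℝ) :
    (Q *ᵥ x) ⬝ᵥ (Q *ᵥ y) = x ⬝ᵥ y := by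
  rw [← Matrix.vecMul_transpose, Matrix.dotProduct_mulVec, Matrix.vecMul_vecMul, hQ,
    Matrix.vecMul_one]

lemma dot_self_nonneg (v : Fin n → ℝ) : 0 ≤ v ⬝ᵥ v :=
  Finset.sum_nonneg fun i _ => mul_self_nonneg (v i)

lemma single_dot_single (i j : Fin n) :
    (Pi.single i 1 : Fin n → ℝ) ⬝ᵥ Pi.single j 1 = if j = i then 1 else 0 := by
  rw [dotProduct_single, mul_one, Pi.single_apply]

lemma vmv_mul (a b c d : Fin n → ℝ) :
    vecMulVec a b * vecMulVec c d = (b ⬝ᵥ c) • vecMulVec a d := by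
  ext i j
  simp only [Matrix.mul_apply, Matrix.vecMulVec_apply, Matrix.smul_apply, smul_eq_mul,
    dotProduct, Finset.sum_mul]
  exact Finset.sum_congr rfl fun k _ => by ring

lemma vmv_transpose (a b : Fin n → ℝ) : (vecMulVec a b)ᵀ = vecMulVec b a := by
  ext i j; simp [Matrix.vecMulVec_apply, mul_comm]

lemma vmv_mulVec (a b x : Fin n → ℝ) : vecMulVec a b *ᵥ x = (b ⬝ᵥ x) • a := by
  ext i
  simp only [Matrix.mulVec, dotProduct, Matrix.vecMulVec_apply, Pi.smul_apply,
    smul_eq_mul, Finset.sum_mul, Finset.mul_sum]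
  exact Finset.sum_congr rfl fun k _ => by ring

/-- rotation by angle θ in the plane spanned by orthonormal `e, w`. -/
noncomputable def rot (e w : Fin n → ℝ) (θ : ℝ) : Matrix (Fin n) (Fin n) ℝ :=
  1 + (Real.cos θ - 1) • (vecMulVec e e + vecMulVec w w)
    + Real.sin θ • (vecMulVec e w - vecMulVec w e)

lemma rot_zero (e w : Fin n → ℝ) : rot e w 0 = 1 := by simp [rot]

lemma continuous_rot (e w : Fin n → ℝ) : Continuous fun θ => rot e w θ := by
  unfold rot; fun_prop

variable {e w : Fin n → ℝ}

lemma rot_orth (he : e ⬝ᵥ e = 1) (hw : w ⬝ᵥ w = 1) (hew : e ⬝ᵥ w = 0) (θ : ℝ) :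
    (rot e w θ)ᵀ * rot e w θ = 1 := by
  have hwe : w ⬝ᵥ e = 0 := by rwa [dotProduct_comm]
  set a := Real.cos θ - 1 with ha
  set b := Real.sin θ with hb
  have habs : a ^ 2 + 2 * a + b ^ 2 = 0 := by
    have := Real.sin_sq_add_cos_sq θ
    simp only [ha, hb]; nlinarith [this]
  have expand : (rot e w θ)ᵀ * rot e w θ =
      1 + (a ^ 2 + 2 * a + b ^ 2) • (vecMulVec e e + vecMulVec w w) := by
    simp only [rot, transpose_add, transpose_smul, transpose_one, transpose_sub,
      vmv_transpose, mul_add, add_mul, Matrix.smul_mul, Matrix.mul_smul, mul_one, one_mul,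
      sub_mul, mul_sub, vmv_mul, he, hw, hew, hwe, one_smul, zero_smul, smul_smul,
      smul_sub, smul_add, sub_zero, zero_sub]
    module
  rw [expand, habs, zero_smul, add_zero]

lemma rot_mulVec_fixed (θ : ℝ) {x : Fin n → ℝ} (hex : e ⬝ᵥ x = 0) (hwx : w ⬝ᵥ x = 0) :
    rot e w θ *ᵥ x = x := by
  simp [rot, Matrix.add_mulVec, Matrix.smul_mulVec, Matrix.sub_mulVec,
    vmv_mulVec, hex, hwx, Matrix.one_mulVec]

lemma rot_mulVec_target (he : e ⬝ᵥ e = 1) (hw : w ⬝ᵥ w = 1) (hew : e ⬝ᵥ w = 0)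
    {θ' c s : ℝ} (hcs : Real.cos θ' = c) (hss : Real.sin θ' = s)
    (h1 : c ^ 2 + s ^ 2 = 1) :
    rot e w θ' *ᵥ (c • e + s • w) = e := by
  have hwe : w ⬝ᵥ e = 0 := by rwa [dotProduct_comm]
  simp only [rot, hcs, hss, Matrix.add_mulVec, Matrix.smul_mulVec, Matrix.sub_mulVec,
    Matrix.one_mulVec, vmv_mulVec, Matrix.mulVec_add, Matrix.mulVec_smul,
    dotProduct_smul, he, hw, hew, hwe, smul_eq_mul, mul_one, mul_zero]
  match_scalars <;> nlinarith [h1]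

lemma step (k : ℕ) (hk : k + 1 < n) {Q : Matrix (Fin n) (Fin n) ℝ} (hQ : Qᵀ * Q = 1)
    (hfix : ∀ i : Fin n, (i : ℕ) < k → Q *ᵥ Pi.single i 1 = Pi.single i 1) :
    ∃ Q', Q'ᵀ * Q' = 1 ∧ (∀ i : Fin n, (i : ℕ) < k + 1 → Q' *ᵥ Pi.single i 1 = Pi.single i 1) ∧
      JoinedIn (Oset n) Q Q' := by
  have hkn : k < n := by omega
  set kn : Fin n := ⟨k, hkn⟩ with hknd
  set kn1 : Fin n := ⟨k + 1, hk⟩ with hkn1d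
  set e : Fin n → ℝ := Pi.single kn 1 with he_d
  set v : Fin n → ℝ := Q *ᵥ e with hv_d
  have hee : e ⬝ᵥ e = 1 := by rw [he_d, single_dot_single]; simp
  have hvv : v ⬝ᵥ v = 1 := by rw [hv_d, mulVec_dot hQ, hee]
  have hvlow : ∀ i : Fin n, (i : ℕ) < k → v ⬝ᵥ Pi.single i 1 = 0 := by
    intro i hi
    have h2 : v ⬝ᵥ Pi.single i 1 = (Q *ᵥ e) ⬝ᵥ (Q *ᵥ Pi.single i 1) := by
      rw [hfix i hi, hv_d]
    have hik : i ≠ kn := by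
      intro h; rw [h] at hi; exact Nat.lt_irrefl k hi
    rw [h2, mulVec_dot hQ, he_d, single_dot_single, if_neg hik]
  set c : ℝ := v ⬝ᵥ e with hc_d
  set u : Fin n → ℝ := v - c • e with hu_d
  have hev : e ⬝ᵥ v = c := by rw [dotProduct_comm, hc_d]
  have huu : u ⬝ᵥ u = 1 - c ^ 2 := by
    simp only [hu_d, sub_dotProduct, dotProduct_sub, smul_dotProduct,
      dotProduct_smul, smul_eq_mul, hvv, hee, hev, ← hc_d]
    ring
  have hu0 : 0 ≤ u ⬝ᵥ u := dot_self_nonneg u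
  have hc2 : c ^ 2 ≤ 1 := by nlinarith
  set s : ℝ := Real.sqrt (u ⬝ᵥ u) with hs_d
  have hs0 : 0 ≤ s := Real.sqrt_nonneg _
  have hs2 : s ^ 2 = 1 - c ^ 2 := by rw [hs_d, Real.sq_sqrt hu0, huu]
  have hcs : c ^ 2 + s ^ 2 = 1 := by rw [hs2]; ring
  have hwch : ∃ w : Fin n → ℝ, w ⬝ᵥ w = 1 ∧ e ⬝ᵥ w = 0 ∧
      (∀ i : Fin n, (i : ℕ) < k → w ⬝ᵥ Pi.single i 1 = 0) ∧ v = c • e + s • w := by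
    by_cases hs : s = 0
    · refine ⟨Pi.single kn1 1, ?_, ?_, ?_, ?_⟩
      · rw [single_dot_single]; simp
      · rw [he_d, single_dot_single, if_neg (Fin.ne_of_val_ne (show k + 1 ≠ k by omega))]
      · intro i hi
        rw [single_dot_single, if_neg (Fin.ne_of_val_ne (show (i : ℕ) ≠ k + 1 by omega))]
      · have h0 : u = 0 := by
          rw [← dotProduct_self_eq_zero (v := u), huu, ← hs2, hs]; norm_num
        have hv : v = c • e := by
          have h1 : v - c • e = 0 := by rw [← hu_d]; exact h0
          rw [← sub_eq_zero]; exact h1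
        rw [hv, hs]; simp
    · refine ⟨s⁻¹ • u, ?_, ?_, ?_, ?_⟩
      · simp only [smul_dotProduct, dotProduct_smul, smul_eq_mul, huu, ← hs2]
        field_simp
      · have heu : e ⬝ᵥ u = 0 := by
          simp only [hu_d, dotProduct_sub, dotProduct_smul, smul_eq_mul, hev, hee]
          ring
        simp [dotProduct_smul, heu]
      · intro i hi
        have hui : u ⬝ᵥ Pi.single i 1 = 0 := by
          have hik : i ≠ kn := Fin.ne_of_val_ne (show (i:ℕ) ≠ k by omega)
          simp only [hu_d, sub_dotProduct, smul_dotProduct, smul_eq_mul,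
            hvlow i hi, he_d, single_dot_single, if_neg hik]
          ring
        rw [smul_dotProduct, hui, smul_zero]
      · rw [smul_smul, mul_inv_cancel₀ hs, one_smul, hu_d]
        abel
  obtain ⟨w, hww, hew, hwlow, hvdec⟩ := hwch
  set θ := Real.arccos c with hθ_d
  have hcos : Real.cos θ = c := Real.cos_arccos (by nlinarith) (by nlinarith)
  have hsin : Real.sin θ = s := by
    rw [hθ_d, Real.sin_arccos, show (1 : ℝ) - c ^ 2 = s ^ 2 by linarith]
    exact Real.sqrt_sq hs0
  have horth : ∀ t : ℝ, (rot e w t * Q)ᵀ * (rot e w t * Q) = 1 := by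
    intro t
    simp only [Matrix.transpose_mul, Matrix.mul_assoc]
    rw [← Matrix.mul_assoc (rot e w t)ᵀ, rot_orth hee hww hew, Matrix.one_mul, hQ]
  refine ⟨rot e w θ * Q, horth θ, ?_, ?_⟩
  · intro i hi
    rw [← Matrix.mulVec_mulVec]
    by_cases hik : (i : ℕ) < k
    · rw [hfix i hik]
      refine rot_mulVec_fixed θ ?_ ?_
      · rw [he_d, single_dot_single, if_neg (Fin.ne_of_val_ne (show (i:ℕ) ≠ k by omega))]
      · exact hwlow i hik
    · have hik' : i = kn := Fin.ext (show (i:ℕ) = k by omega)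
      rw [hik', ← he_d, ← hv_d, hvdec]
      exact rot_mulVec_target hee hww hew hcos hsin hcs
  · refine ⟨⟨⟨fun t : unitInterval => rot e w (t * θ) * Q, ?_⟩, ?_, ?_⟩, fun t => horth _⟩
    · exact ((continuous_rot e w).comp (continuous_subtype_val.mul continuous_const)).matrix_mul
        continuous_const
    · show rot e w ((0 : unitInterval) * θ) * Q = Q
      norm_num [rot_zero]
    · show rot e w ((1 : unitInterval) * θ) * Q = rot e w θ * Q
      norm_num

lemma reach (k : ℕ) (hk : k ≤ n - 1) {Q : Matrix (Fin n) (Fin n) ℝ} (hQ : Qᵀ * Q = 1) :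
    ∃ Q', Q'ᵀ * Q' = 1 ∧ (∀ i : Fin n, (i : ℕ) < k → Q' *ᵥ Pi.single i 1 = Pi.single i 1) ∧
      JoinedIn (Oset n) Q Q' := by
  induction k with
  | zero => exact ⟨Q, hQ, fun i hi => absurd hi (by omega), JoinedIn.refl hQ⟩
  | succ k ih =>
    obtain ⟨Q₁, h1, hfix, hj⟩ := ih (by omega)
    obtain ⟨Q₂, h2, hfix2, hj2⟩ := step k (by omega) h1 hfix
    exact ⟨Q₂, h2, hfix2, hj.trans hj2⟩

lemma joinedIn_SO {Q Q' : Matrix (Fin n) (Fin n) ℝ} (h : JoinedIn (Oset n) Q Q')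
    (hdet : Q.det = 1) : JoinedIn (SOset n) Q Q' ∧ Q'.det = 1 := by
  obtain ⟨γ, hγ⟩ := h
  have sq1 : ∀ s : unitInterval, (γ s).det ^ 2 = 1 := by
    intro s
    have h1 : (γ s)ᵀ * (γ s) = 1 := hγ s
    have h2 := congrArg Matrix.det h1
    rwa [Matrix.det_mul, Matrix.det_transpose, ← sq, Matrix.det_one] at h2
  have hdett : ∀ t : unitInterval, (γ t).det = 1 := by
    intro t
    by_contra hne
    have hneg : (γ t).det = -1 := by
      have h2 := sq1 t
      rcases mul_eq_zero.mp (show ((γ t).det - 1) * ((γ t).det + 1) = 0 by nlinarith) with h | h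
      · exact absurd (by linarith : (γ t).det = 1) hne
      · linarith
    set f : ℝ → ℝ := fun s => (γ.extend s).det with hf
    have hcont : ContinuousOn f (Set.Icc 0 (t : ℝ)) :=
      (γ.continuous_extend.matrix_det).continuousOn
    have h0 : f 0 = 1 := by rw [hf]; simp only [Path.extend_zero]; exact hdet
    have ht : f (t : ℝ) = -1 := by
      rw [hf]; simp only [Path.extend_extends' γ t]; exact hneg
    have hmem : (0 : ℝ) ∈ Set.Icc (f (t : ℝ)) (f 0) := by
      rw [h0, ht]; constructor <;> norm_num
    obtain ⟨a, ha, hfa⟩ := intermediate_value_Icc' t.2.1 hcont hmem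
    have haI : a ∈ Set.Icc (0 : ℝ) 1 := ⟨ha.1, le_trans ha.2 t.2.2⟩
    have := sq1 ⟨a, haI⟩
    rw [← Path.extend_apply γ haI] at this
    change f a ^ 2 = 1 at this
    rw [hfa] at this
    norm_num at this
  refine ⟨⟨γ, fun t => ⟨hγ t, hdett t⟩⟩, ?_⟩
  have := hdett 1
  rwa [γ.target] at this

lemma fix_eq_one (hn : 1 ≤ n) {Q : Matrix (Fin n) (Fin n) ℝ} (hQ : Qᵀ * Q = 1)
    (hfix : ∀ i : Fin n, (i : ℕ) < n - 1 → Q *ᵥ Pi.single i 1 = Pi.single i 1)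
    (hdet : Q.det = 1) : Q = 1 := by
  have hl : n - 1 < n := by omega
  set ln : Fin n := ⟨n - 1, hl⟩ with hln_d
  have hcol : ∀ i : Fin n, (i : ℕ) < n - 1 → ∀ j, Q j i = (Pi.single i 1 : Fin n → ℝ) j := by
    intro i hi j
    have := congrFun (hfix i hi) j
    rw [Matrix.mulVec_single] at this
    simpa using this
  have hlast0 : ∀ j : Fin n, (j : ℕ) < n - 1 → Q j ln = 0 := by
    intro j hj
    have h1 : (Q *ᵥ Pi.single ln 1) ⬝ᵥ (Q *ᵥ Pi.single j 1) = 0 := by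
      rw [mulVec_dot hQ, single_dot_single,
        if_neg (Fin.ne_of_val_ne (show (j : ℕ) ≠ n - 1 by omega))]
    rw [hfix j hj] at h1
    rw [dotProduct_single, mul_one, Matrix.mulVec_single] at h1
    simpa using h1
  set d : Fin n → ℝ := fun j => if (j : ℕ) < n - 1 then 1 else Q ln ln with hd_d
  have hQd : Q = Matrix.diagonal d := by
    ext j i
    rw [Matrix.diagonal_apply]
    by_cases hi : (i : ℕ) < n - 1
    · rw [hcol i hi j, Pi.single_apply]
      by_cases hji : j = i
      · rw [if_pos hji, if_pos hji, hji]
        exact (if_pos hi).symm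
      · rw [if_neg hji, if_neg hji]
    · have hiln : i = ln := Fin.ext (show (i : ℕ) = n - 1 by omega)
      by_cases hji : j = i
      · rw [if_pos hji, hji, hiln]
        exact (if_neg (show ¬(n - 1 < n - 1) from lt_irrefl _)).symm
      · rw [if_neg hji, hiln]
        refine hlast0 j ?_
        have h1 := j.isLt
        have h2 : (j : ℕ) ≠ n - 1 := fun h => hji (by rw [hiln]; exact Fin.ext h)
        omega
  have hprod : Matrix.det (Matrix.diagonal d) = d ln := by
    rw [Matrix.det_diagonal]
    apply Finset.prod_eq_single_of_mem ln (Finset.mem_univ ln)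
    intro b _ hb
    have hb2 : (b : ℕ) ≠ n - 1 := fun h => hb (Fin.ext h)
    have hb3 : (b : ℕ) < n - 1 := by have := b.isLt; omega
    exact if_pos hb3
  have hdl : d ln = 1 := by rw [← hprod, ← hQd, hdet]
  have hd1 : d = fun _ => 1 := by
    funext j
    by_cases hj : (j : ℕ) < n - 1
    · exact if_pos hj
    · show (if (j : ℕ) < n - 1 then (1 : ℝ) else Q ln ln) = 1
      rw [if_neg hj]
      have h2 : (if ((ln : Fin n) : ℕ) < n - 1 then (1 : ℝ) else Q ln ln) = 1 := hdl
      rwa [if_neg (show ¬(n - 1 < n - 1) from lt_irrefl _)] at h2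
  rw [hQd, hd1, Matrix.diagonal_one]

lemma one_mem_SOset : (1 : Matrix (Fin n) (Fin n) ℝ) ∈ SOset n :=
  ⟨by simp, Matrix.det_one⟩

lemma isPathConnected_SOset (hn : 1 ≤ n) : IsPathConnected (SOset n) := by
  refine ⟨1, one_mem_SOset, ?_⟩
  intro Q hQ
  obtain ⟨Q', h1, hfix, hj⟩ := reach (n - 1) le_rfl hQ.1
  obtain ⟨hjSO, hdet'⟩ := joinedIn_SO hj hQ.2
  have hQ1 : Q' = 1 := fix_eq_one hn h1 hfix hdet'
  rw [hQ1] at hjSO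
  exact hjSO.symm

/-! ### Grassmannian: symmetric projectors of rank `r` -/

def Dmat (n r : ℕ) : Matrix (Fin n) (Fin n) ℝ :=
  Matrix.diagonal (fun i => if (i : ℕ) < r then 1 else 0)

lemma perm_exists {p q : Fin n → Prop} [DecidablePred p] [DecidablePred q]
    (h : Fintype.card {i // p i} = Fintype.card {i // q i}) :
    ∃ σ : Equiv.Perm (Fin n), ∀ i, (q (σ i) ↔ p i) := by
  have hc : Fintype.card {i // ¬ p i} = Fintype.card {i // ¬ q i} := by
    rw [Fintype.card_subtype_compl, Fintype.card_subtype_compl, h]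
  refine ⟨(Equiv.sumCompl p).symm.trans (((Fintype.equivOfCardEq h).sumCongr
    (Fintype.equivOfCardEq hc)).trans (Equiv.sumCompl q)), fun i => ?_⟩
  by_cases hp : p i
  · have h1 : (Equiv.sumCompl p).symm i = Sum.inl ⟨i, hp⟩ := by
      simp [Equiv.sumCompl, hp]
    simp only [Equiv.trans_apply, h1, Equiv.sumCongr_apply, Sum.map_inl, Equiv.sumCompl_apply_inl]
    exact iff_of_true (Fintype.equivOfCardEq h ⟨i, hp⟩).2 hp
  · have h1 : (Equiv.sumCompl p).symm i = Sum.inr ⟨i, hp⟩ := by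
      simp [Equiv.sumCompl, hp]
    simp only [Equiv.trans_apply, h1, Equiv.sumCongr_apply, Sum.map_inr, Equiv.sumCompl_apply_inr]
    exact iff_of_false (Fintype.equivOfCardEq hc ⟨i, hp⟩).2 hp

lemma card_lt (n r : ℕ) (hr : r ≤ n) : Fintype.card {i : Fin n // (i : ℕ) < r} = r := by
  have e : {i : Fin n // (i : ℕ) < r} ≃ Fin r :=
    { toFun := fun x => ⟨x.1, x.2⟩
      invFun := fun y => ⟨⟨y.1, lt_of_lt_of_le y.2 hr⟩, y.2⟩
      left_inv := fun x => Subtype.ext (Fin.ext rfl)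
      right_inv := fun y => rfl }
  rw [Fintype.card_congr e, Fintype.card_fin]

lemma isUnit_det_of_orth {Q : Matrix (Fin n) (Fin n) ℝ} (hQ : Qᵀ * Q = 1) : IsUnit Q.det := by
  have h := congrArg Matrix.det hQ
  rw [Matrix.det_mul, Matrix.det_transpose, Matrix.det_one] at h
  exact IsUnit.of_mul_eq_one _ h

lemma isUnit_det_of_orth' {Q : Matrix (Fin n) (Fin n) ℝ} (hQ : Qᵀ * Q = 1) : IsUnit Qᵀ.det := by
  apply isUnit_det_of_orth
  rw [Matrix.transpose_transpose]
  exact mul_eq_one_comm.mp hQ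

lemma Dmat_mul_Dmat (n r : ℕ) : Dmat n r * Dmat n r = Dmat n r := by
  have h : (fun i : Fin n => (if (i : ℕ) < r then (1 : ℝ) else 0) *
      (if (i : ℕ) < r then (1 : ℝ) else 0)) = fun i : Fin n => if (i : ℕ) < r then (1 : ℝ) else 0 :=
    funext fun i => by by_cases h : (i : ℕ) < r <;> simp [h]
  rw [Dmat, Matrix.diagonal_mul_diagonal, h]

lemma rank_Dmat (n r : ℕ) (hr : r ≤ n) : (Dmat n r).rank = r := by
  calc (Dmat n r).rank = Fintype.card {i : Fin n // (i : ℕ) < r} := by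
        rw [Dmat, Matrix.rank_diagonal]
        apply Fintype.card_congr
        apply Equiv.subtypeEquivRight
        intro i
        by_cases h : (i : ℕ) < r <;> simp [h]
  _ = r := card_lt n r hr

lemma proj_of_orth {r : ℕ} (hr : r ≤ n) {Q : Matrix (Fin n) (Fin n) ℝ} (hQ : Qᵀ * Q = 1) :
    ((Q * Dmat n r * Qᵀ) * (Q * Dmat n r * Qᵀ) = Q * Dmat n r * Qᵀ) ∧
    (Q * Dmat n r * Qᵀ)ᵀ = Q * Dmat n r * Qᵀ ∧ (Q * Dmat n r * Qᵀ).rank = r := by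
  refine ⟨?_, ?_, ?_⟩
  · simp only [Matrix.mul_assoc]
    rw [← Matrix.mul_assoc Qᵀ Q, hQ, Matrix.one_mul, ← Matrix.mul_assoc (Dmat n r),
      Dmat_mul_Dmat]
  · rw [Matrix.transpose_mul, Matrix.transpose_mul, Matrix.transpose_transpose, Dmat,
      Matrix.diagonal_transpose, ← Dmat, Matrix.mul_assoc]
  · rw [Matrix.mul_assoc, Matrix.rank_mul_eq_right_of_isUnit_det Q _ (isUnit_det_of_orth hQ),
      Matrix.rank_mul_eq_left_of_isUnit_det Qᵀ _ (isUnit_det_of_orth' hQ), rank_Dmat n r hr]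

lemma conj_cancel {U A B : Matrix (Fin n) (Fin n) ℝ} (hU : Uᵀ * U = 1)
    (h : U * A * Uᵀ = U * B * Uᵀ) : A = B := by
  calc A = (Uᵀ * U) * A * (Uᵀ * U) := by rw [hU, Matrix.one_mul, Matrix.mul_one]
  _ = Uᵀ * (U * A * Uᵀ) * U := by simp only [Matrix.mul_assoc]
  _ = Uᵀ * (U * B * Uᵀ) * U := by rw [h]
  _ = (Uᵀ * U) * B * (Uᵀ * U) := by simp only [Matrix.mul_assoc]
  _ = B := by rw [hU, Matrix.one_mul, Matrix.mul_one]

lemma conj_diag_apply (A : Matrix (Fin n) (Fin n) ℝ) (d : Fin n → ℝ) (i j : Fin n) :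
    (A * Matrix.diagonal d * Aᵀ) i j = ∑ k, A i k * d k * A j k := by
  have h : ∀ k, (A * Matrix.diagonal d) i k = A i k * d k := fun k => Matrix.mul_diagonal d A i k
  rw [Matrix.mul_apply]
  simp only [h, Matrix.transpose_apply]

lemma exists_orth_of_proj (hn : 1 ≤ n) {r : ℕ} (hr : r ≤ n) {P : Matrix (Fin n) (Fin n) ℝ}
    (h1 : P * P = P) (h2 : Pᵀ = P) (h3 : P.rank = r) :
    ∃ Q ∈ SOset n, P = Q * Dmat n r * Qᵀ := by
  have hherm : P.IsHermitian := by
    show Pᴴ = P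
    rw [Matrix.conjTranspose_eq_transpose_of_trivial]
    exact h2
  set U : Matrix (Fin n) (Fin n) ℝ := ↑hherm.eigenvectorUnitary with hU_d
  set μ : Fin n → ℝ := hherm.eigenvalues with hμ_d
  have hU : Uᵀ * U = 1 := by
    have h4 := hherm.eigenvectorUnitary.2.1
    rwa [Matrix.star_eq_conjTranspose, Matrix.conjTranspose_eq_transpose_of_trivial] at h4
  have spec : P = U * Matrix.diagonal μ * Uᵀ := by
    have h4 := hherm.spectral_theorem
    rwa [Unitary.conjStarAlgAut_apply, Matrix.star_eq_conjTranspose, Matrix.conjTranspose_eq_transpose_of_trivial,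
      show (RCLike.ofReal ∘ μ : Fin n → ℝ) = μ from rfl] at h4
  have hidem : Matrix.diagonal μ * Matrix.diagonal μ = Matrix.diagonal μ := by
    apply conj_cancel hU
    have key : (U * Matrix.diagonal μ * Uᵀ) * (U * Matrix.diagonal μ * Uᵀ) =
        U * (Matrix.diagonal μ * Matrix.diagonal μ) * Uᵀ := by
      simp only [Matrix.mul_assoc]
      rw [← Matrix.mul_assoc Uᵀ U, hU, Matrix.one_mul]
    rw [← key, ← spec, h1, spec]
  have μsq : ∀ i, μ i * μ i = μ i := by
    intro i
    rw [Matrix.diagonal_mul_diagonal] at hidem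
    have h4 := congrFun (congrFun hidem i) i
    simpa using h4
  have hcard : Fintype.card {i // μ i ≠ 0} = r := by
    rw [← Matrix.rank_diagonal μ, ← h3, spec, Matrix.mul_assoc,
      Matrix.rank_mul_eq_right_of_isUnit_det U _ (isUnit_det_of_orth hU),
      Matrix.rank_mul_eq_left_of_isUnit_det Uᵀ _ (isUnit_det_of_orth' hU)]
  obtain ⟨σ, hσ⟩ := perm_exists (p := fun i : Fin n => (i : ℕ) < r) (q := fun i => μ i ≠ 0)
    (by rw [card_lt n r hr, hcard])
  have μσ : ∀ i : Fin n, μ (σ i) = (if (i : ℕ) < r then (1 : ℝ) else 0) := by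
    intro i
    by_cases h : (i : ℕ) < r
    · have hq : μ (σ i) ≠ 0 := (hσ i).mpr h
      rw [if_pos h]
      have h5 : μ (σ i) * (μ (σ i) - 1) = 0 := by nlinarith [μsq (σ i)]
      rcases mul_eq_zero.mp h5 with h' | h'
      · exact absurd h' hq
      · linarith
    · rw [if_neg h]
      by_contra hne
      exact h ((hσ i).mp hne)
  set V : Matrix (Fin n) (Fin n) ℝ := U.submatrix id σ with hV_d
  have hVo : Vᵀ * V = 1 := by
    ext i j
    calc (Vᵀ * V) i j = (Uᵀ * U) (σ i) (σ j) := by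
          simp [Matrix.mul_apply, Matrix.submatrix_apply, Matrix.transpose_apply, hV_d]
    _ = (1 : Matrix (Fin n) (Fin n) ℝ) (σ i) (σ j) := by rw [hU]
    _ = (1 : Matrix (Fin n) (Fin n) ℝ) i j := by
          simp [Matrix.one_apply, Equiv.apply_eq_iff_eq]
  have hVP : V * Dmat n r * Vᵀ = P := by
    rw [spec]
    ext i j
    rw [Dmat, conj_diag_apply, conj_diag_apply,
      ← Equiv.sum_comp σ (fun k => U i k * μ k * U j k)]
    apply Finset.sum_congr rfl
    intro k _
    simp only [hV_d, Matrix.submatrix_apply, id, μσ k]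
  have hdet2 : V.det * V.det = 1 := by
    have h4 := congrArg Matrix.det hVo
    rwa [Matrix.det_mul, Matrix.det_transpose, Matrix.det_one] at h4
  by_cases hdv : V.det = 1
  · exact ⟨V, ⟨hVo, hdv⟩, hVP.symm⟩
  · have hdv' : V.det = -1 := by
      rcases mul_self_eq_one_iff.mp hdet2 with h' | h'
      · exact absurd h' hdv
      · exact h'
    have hn0 : 0 < n := hn
    set z0 : Fin n := ⟨0, hn0⟩ with hz0_d
    set g : Fin n → ℝ := fun j => if j = z0 then (-1 : ℝ) else 1 with hg_d
    set G : Matrix (Fin n) (Fin n) ℝ := Matrix.diagonal g with hG_d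
    have hgg : ∀ j, g j * g j = 1 := by
      intro j; by_cases h : j = z0 <;> simp [hg_d, h]
    have hGG : G * G = 1 := by
      rw [hG_d, Matrix.diagonal_mul_diagonal,
        show (fun i => g i * g i) = fun _ => (1 : ℝ) from funext hgg, Matrix.diagonal_one]
    have hGt : Gᵀ = G := Matrix.diagonal_transpose g
    have hWo : (V * G)ᵀ * (V * G) = 1 := by
      rw [Matrix.transpose_mul, hGt, Matrix.mul_assoc, ← Matrix.mul_assoc Vᵀ V, hVo,
        Matrix.one_mul, hGG]
    have hdetG : G.det = -1 := by
      rw [hG_d, Matrix.det_diagonal]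
      rw [Finset.prod_eq_single_of_mem z0 (Finset.mem_univ z0)]
      · simp [hg_d]
      · intro b _ hb
        simp [hg_d, hb]
    have hdetW : (V * G).det = 1 := by
      rw [Matrix.det_mul, hdv', hdetG]; norm_num
    have hGD : G * Dmat n r * G = Dmat n r := by
      have hfun : (fun i : Fin n => g i * (if (i : ℕ) < r then (1 : ℝ) else 0) * g i) =
          fun i : Fin n => if (i : ℕ) < r then (1 : ℝ) else 0 := by
        funext i
        by_cases h : i = z0
        · subst h
          by_cases h2 : 0 < r <;> simp [hg_d, h2, hz0_d]
        · by_cases h2 : (i : ℕ) < r <;> simp [hg_d, h, h2]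
      rw [hG_d, Dmat, Matrix.diagonal_mul_diagonal, Matrix.diagonal_mul_diagonal, hfun]
    have hWP : (V * G) * Dmat n r * (V * G)ᵀ = P := by
      rw [← hVP, Matrix.transpose_mul, hGt]
      calc V * G * Dmat n r * (G * Vᵀ) = V * (G * Dmat n r * G) * Vᵀ := by
            simp only [Matrix.mul_assoc]
      _ = V * Dmat n r * Vᵀ := by rw [hGD]
    exact ⟨V * G, ⟨hWo, hdetW⟩, hWP.symm⟩

/-! ### Assembly -/

lemma pc_prod {X Y : Type*} [TopologicalSpace X] [TopologicalSpace Y] {S : Set X} {T : Set Y}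
    (hS : IsPathConnected S) (hT : IsPathConnected T) : IsPathConnected (S ×ˢ T) := by
  obtain ⟨x, hx, hxj⟩ := hS
  obtain ⟨y, hy, hyj⟩ := hT
  refine ⟨(x, y), ⟨hx, hy⟩, ?_⟩
  rintro ⟨a, b⟩ ⟨ha, hb⟩
  obtain ⟨γ1, hγ1⟩ := hxj ha
  obtain ⟨γ2, hγ2⟩ := hyj hb
  exact ⟨γ1.prod γ2, fun t => ⟨hγ1 t, hγ2 t⟩⟩

lemma pc_pi {ι : Type*} {X : ι → Type*} [∀ i, TopologicalSpace (X i)] {S : ∀ i, Set (X i)}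
    (hS : ∀ i, IsPathConnected (S i)) : IsPathConnected (Set.univ.pi S) := by
  choose x hx hjx using hS
  refine ⟨x, fun i _ => hx i, ?_⟩
  intro y hy
  have h : ∀ i, JoinedIn (S i) (x i) (y i) := fun i => hjx i (hy i (Set.mem_univ i))
  choose γ hγ using h
  exact ⟨Path.pi γ, fun t i _ => hγ i t⟩

lemma cont_list_prod {X ι : Type*} [TopologicalSpace X] (l : List ι)
    (f : ι → X → Matrix (Fin n) (Fin n) ℝ) (hf : ∀ i, Continuous (f i)) :
    Continuous fun x => (l.map (fun i => f i x)).prod := by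
  induction l with
  | nil => simpa using continuous_const
  | cons a l ih =>
    simp only [List.map_cons, List.prod_cons]
    exact (hf a).matrix_mul ih

def PSet (n K : ℕ) : Set ((Fin (K - 1) → Matrix (Fin n) (Fin n) ℝ) ×
    Matrix (Fin n) (Fin n) ℝ) :=
  (Set.univ.pi fun _ => SOset n) ×ˢ SOset n

lemma isCompact_PSet (n K : ℕ) : IsCompact (PSet n K) :=
  (isCompact_univ_pi fun _ => isCompact_SOset n).prod (isCompact_SOset n)

lemma isPathConnected_PSet (n K : ℕ) (hn : 1 ≤ n) : IsPathConnected (PSet n K) :=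
  pc_prod (pc_pi fun _ => isPathConnected_SOset hn) (isPathConnected_SOset hn)

noncomputable def Gmap (n K : ℕ) (r : Fin (K - 1) → ℕ) :
    (Fin (K - 1) → Matrix (Fin n) (Fin n) ℝ) × Matrix (Fin n) (Fin n) ℝ →
      (Fin K → Matrix (Fin n) (Fin n) ℝ) :=
  fun QH => Aker n K (fun i => QH.1 i * Dmat n (r i) * (QH.1 i)ᵀ) QH.2

lemma continuous_Gmap (n K : ℕ) (r : Fin (K - 1) → ℕ) : Continuous (Gmap n K r) := by
  unfold Gmap Aker
  apply continuous_pi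
  intro j
  apply continuous_finset_sum
  intro δ _
  apply Continuous.matrix_mul continuous_snd
  apply cont_list_prod
  intro i
  by_cases hδ : δ i
  · simp only [hδ, if_true]
    exact continuous_const.sub
      ((((continuous_apply i).comp continuous_fst).matrix_mul continuous_const).matrix_mul
        (((continuous_apply i).comp continuous_fst).matrix_transpose))
  · simp only [hδ, if_false]
    exact (((continuous_apply i).comp continuous_fst).matrix_mul continuous_const).matrix_mul
      (((continuous_apply i).comp continuous_fst).matrix_transpose)

lemma SOCK_eq (n K : ℕ) (hn : 1 ≤ n) (r : Fin (K - 1) → ℕ) (hr : ∀ i, r i ≤ n) :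
    SOCK n K r = Gmap n K r '' PSet n K := by
  ext A
  constructor
  · rintro ⟨P, H, hP, hH1, hH2, hA⟩
    have hch : ∀ i, ∃ Q ∈ SOset n, P i = Q * Dmat n (r i) * Qᵀ := fun i =>
      exists_orth_of_proj hn (hr i) (hP i).1.1 (hP i).1.2 (hP i).2
    choose Q hQ hPQ using hch
    refine ⟨(Q, H), ⟨fun i _ => hQ i, hH1, hH2⟩, ?_⟩
    have hfun : (fun i => Q i * Dmat n (r i) * (Q i)ᵀ) = P := funext fun i => (hPQ i).symm
    rw [hA]
    unfold Gmap
    rw [hfun]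
  · rintro ⟨⟨Q, H⟩, ⟨hQ, hH⟩, rfl⟩
    refine ⟨fun i => Q i * Dmat n (r i) * (Q i)ᵀ, H, ?_, hH.1, hH.2, rfl⟩
    intro i
    have hQi := hQ i (Set.mem_univ i)
    obtain ⟨ha, hb, hc⟩ := proj_of_orth (hr i) hQi.1
    exact ⟨⟨ha, hb⟩, hc⟩

end SockAux

theorem stmt12 (n K : ℕ) (hn : 1 ≤ n) (hK : 2 ≤ K)
    (r : Fin (K-1) → ℕ) (hr : ∀ i, r i ≤ n) :
    IsCompact (SOCK n K r) ∧ IsPathConnected (SOCK n K r) := by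
  rw [SockAux.SOCK_eq n K hn r hr]
  constructor
  · exact (SockAux.isCompact_PSet n K).image (SockAux.continuous_Gmap n K r)
  · exact (SockAux.isPathConnected_PSet n K hn).image (SockAux.continuous_Gmap n K r)
end

section
/- Let n ≥ 1 and let k_1, k_2 be integers with 1 ≤ k_1 ≤ k_2 + 1. For all symmetric projectors P'_1 of rank k_1 − 1 and P'_2 of rank k_2 + 1 (both n×n real matrices), there exist symmetric projectors P_1 of rank k_1 and P_2 of rank k_2 such that P_1 + P_2 = P'_1 + P'_2, P_1·P_2 = P'_1·P'_2, and P_2·P_1 = P'_2·P'_1. -/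
open Matrix

lemma mul_vecMulVec' {n : ℕ} (M : Matrix (Fin n) (Fin n) ℝ) (a b : Fin n → ℝ) :
    M * vecMulVec a b = vecMulVec (M *ᵥ a) b := by
  ext i j
  simp [Matrix.mul_apply, vecMulVec_apply, Matrix.mulVec, dotProduct,
    Finset.sum_mul, mul_assoc]

lemma vecMulVec_mul' {n : ℕ} (M : Matrix (Fin n) (Fin n) ℝ) (a b : Fin n → ℝ) :
    vecMulVec a b * M = vecMulVec a (b ᵥ* M) := by
  ext i j
  simp [Matrix.mul_apply, vecMulVec_apply, Matrix.vecMul, dotProduct,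
    Finset.mul_sum, mul_assoc]

lemma vecMulVec_mulVec' {n : ℕ} (a b x : Fin n → ℝ) :
    vecMulVec a b *ᵥ x = (b ⬝ᵥ x) • a := by
  ext i
  simp only [Matrix.mulVec, vecMulVec_apply, dotProduct, Pi.smul_apply, smul_eq_mul,
    Finset.sum_mul]
  exact Finset.sum_congr rfl fun k _ => by ring

lemma vecMulVec_transpose' {n : ℕ} (a : Fin n → ℝ) : (vecMulVec a a)ᵀ = vecMulVec a a := by
  ext i j; simp [vecMulVec_apply, mul_comm]

theorem stmt13 (n : ℕ) (hn : 1 ≤ n) (k₁ k₂ : ℕ) (hk₁ : 1 ≤ k₁) (hk : k₁ ≤ k₂ + 1)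
    (P₁' P₂' : Matrix (Fin n) (Fin n) ℝ)
    (h1 : IsSymProj n P₁') (h1r : P₁'.rank = k₁ - 1)
    (h2 : IsSymProj n P₂') (h2r : P₂'.rank = k₂ + 1) :
    ∃ P₁ P₂ : Matrix (Fin n) (Fin n) ℝ,
      IsSymProj n P₁ ∧ P₁.rank = k₁ ∧ IsSymProj n P₂ ∧ P₂.rank = k₂ ∧
      P₁ + P₂ = P₁' + P₂' ∧ P₁ * P₂ = P₁' * P₂' ∧ P₂ * P₁ = P₂' * P₁' := by
  classical
  obtain ⟨h1p, h1s⟩ := h1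
  obtain ⟨h2p, h2s⟩ := h2
  set U : Submodule ℝ (Fin n → ℝ) := LinearMap.ker P₁'.mulVecLin with hU
  set V : Submodule ℝ (Fin n → ℝ) := LinearMap.range P₂'.mulVecLin with hV
  have hfin : Module.finrank ℝ (Fin n → ℝ) = n := by simp
  have hrn1 : (k₁ - 1) + Module.finrank ℝ U = n := by
    have := LinearMap.finrank_range_add_finrank_ker P₁'.mulVecLin
    rw [hfin] at this
    rw [← h1r]; exact this
  have hVr : Module.finrank ℝ V = k₂ + 1 := h2r
  have hsupinf := Submodule.finrank_sup_add_finrank_inf_eq U V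
  have hsuple : Module.finrank ℝ ↥(U ⊔ V) ≤ n := by
    simpa [hfin] using Submodule.finrank_le (U ⊔ V)
  have hinfpos : 0 < Module.finrank ℝ ↥(U ⊓ V) := by omega
  have hne : U ⊓ V ≠ ⊥ := by
    intro h
    rw [h] at hinfpos
    simp at hinfpos
  obtain ⟨v, hvmem, hv0⟩ := Submodule.ne_bot_iff _ |>.mp hne
  have hv1 : P₁' *ᵥ v = 0 := by
    have := hvmem.1
    simpa [hU, Matrix.mulVecLin_apply] using this
  have hv2 : P₂' *ᵥ v = v := by
    obtain ⟨w, hw⟩ := hvmem.2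
    simp only [Matrix.mulVecLin_apply] at hw
    rw [← hw, Matrix.mulVec_mulVec, h2p]
  have hvm1 : v ᵥ* P₁' = 0 := by
    rw [← Matrix.mulVec_transpose, h1s, hv1]
  have hvm2 : v ᵥ* P₂' = v := by
    rw [← Matrix.mulVec_transpose, h2s, hv2]
  set q : ℝ := v ⬝ᵥ v with hqdef
  have hq : q ≠ 0 := by
    simpa [hqdef] using (dotProduct_self_eq_zero (v := v)).not.mpr hv0
  set c : ℝ := q⁻¹ with hcdef
  have hcq : c * q = 1 := inv_mul_cancel₀ hq
  set W : Matrix (Fin n) (Fin n) ℝ := c • vecMulVec v v with hWdef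
  -- basic facts about W
  have hWv : W *ᵥ v = v := by
    rw [hWdef, Matrix.smul_mulVec, vecMulVec_mulVec', ← hqdef, smul_smul, hcq, one_smul]
  have hWx : ∀ x, W *ᵥ x = (c * (v ⬝ᵥ x)) • v := by
    intro x
    rw [hWdef, Matrix.smul_mulVec, vecMulVec_mulVec', smul_smul]
  have hWW : W * W = W := by
    have hvvW : v ᵥ* vecMulVec v v = q • v := by
      rw [← Matrix.mulVec_transpose, vecMulVec_transpose', vecMulVec_mulVec', hqdef]
    have hsm : vecMulVec v (q • v) = q • vecMulVec v v := by
      ext i j; simp [vecMulVec_apply]; ring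
    rw [hWdef, Matrix.smul_mul, Matrix.mul_smul, vecMulVec_mul', hvvW, hsm, smul_smul,
      smul_smul, mul_assoc, hcq, mul_one]
  have h1W : P₁' * W = 0 := by
    rw [hWdef, Matrix.mul_smul, mul_vecMulVec', hv1]
    ext i j; simp [vecMulVec_apply]
  have hW1 : W * P₁' = 0 := by
    rw [hWdef, Matrix.smul_mul, vecMulVec_mul', hvm1]
    ext i j; simp [vecMulVec_apply]
  have h2W : P₂' * W = W := by
    rw [hWdef, Matrix.mul_smul, mul_vecMulVec', hv2]
  have hW2 : W * P₂' = W := by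
    rw [hWdef, Matrix.smul_mul, vecMulVec_mul', hvm2]
  have hWt : Wᵀ = W := by
    rw [hWdef, Matrix.transpose_smul, vecMulVec_transpose']
  -- the candidates
  refine ⟨P₁' + W, P₂' - W, ⟨?_, ?_⟩, ?_, ⟨?_, ?_⟩, ?_, ?_, ?_, ?_⟩
  · -- idempotent P₁
    rw [Matrix.add_mul, Matrix.mul_add, Matrix.mul_add, h1p, h1W, hW1, hWW, add_zero, zero_add]
  · rw [Matrix.transpose_add, h1s, hWt]
  · -- rank P₁
    have hP₁v : (P₁' + W) *ᵥ v = v := by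
      rw [Matrix.add_mulVec, hv1, hWv, zero_add]
    have hP₁P₁' : (P₁' + W) * P₁' = P₁' := by
      rw [Matrix.add_mul, h1p, hW1, add_zero]
    have hrange : LinearMap.range (P₁' + W).mulVecLin
        = LinearMap.range P₁'.mulVecLin ⊔ (ℝ ∙ v) := by
      apply le_antisymm
      · rintro x ⟨y, rfl⟩
        rw [Matrix.mulVecLin_apply, Matrix.add_mulVec, hWx]
        exact Submodule.add_mem_sup ⟨y, rfl⟩
          (Submodule.smul_mem _ _ (Submodule.mem_span_singleton_self v))
      · refine sup_le ?_ ?_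
        · rintro x ⟨y, rfl⟩
          exact ⟨P₁' *ᵥ y, by
            rw [Matrix.mulVecLin_apply, Matrix.mulVecLin_apply, Matrix.mulVec_mulVec, hP₁P₁']⟩
        · rw [Submodule.span_singleton_le_iff_mem]
          exact ⟨v, by rw [Matrix.mulVecLin_apply, hP₁v]⟩
    have hdisj : LinearMap.range P₁'.mulVecLin ⊓ (ℝ ∙ v) = ⊥ := by
      rw [Submodule.eq_bot_iff]
      rintro x ⟨⟨y, rfl⟩, hx2⟩
      obtain ⟨a, ha⟩ := Submodule.mem_span_singleton.mp hx2
      rw [Matrix.mulVecLin_apply] at ha ⊢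
      have h' : P₁' *ᵥ (P₁' *ᵥ y) = P₁' *ᵥ y := by
        rw [Matrix.mulVec_mulVec, h1p]
      rw [← h', ← ha, Matrix.mulVec_smul, hv1, smul_zero]
    have := Submodule.finrank_sup_add_finrank_inf_eq
      (LinearMap.range P₁'.mulVecLin) (ℝ ∙ v)
    rw [hdisj, finrank_span_singleton hv0] at this
    have hr1 : P₁'.rank = Module.finrank ℝ (LinearMap.range P₁'.mulVecLin) := rfl
    have hR : (P₁' + W).rank = Module.finrank ℝ ↥(LinearMap.range P₁'.mulVecLin ⊔ (ℝ ∙ v)) := by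
      rw [Matrix.rank, hrange]
    rw [hR]
    rw [hr1] at h1r
    simp only [finrank_bot] at this
    omega
  · -- idempotent P₂
    rw [Matrix.sub_mul, Matrix.mul_sub, Matrix.mul_sub, h2p, h2W, hW2, hWW, sub_self, sub_zero]
  · rw [Matrix.transpose_sub, h2s, hWt]
  · -- rank P₂
    have hP₂v : (P₂' - W) *ᵥ v = 0 := by
      rw [Matrix.sub_mulVec, hv2, hWv, sub_self]
    have hP₂'P₂ : P₂' * (P₂' - W) = P₂' - W := by
      rw [Matrix.mul_sub, h2p, h2W]
    have hrange : LinearMap.range P₂'.mulVecLin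
        = LinearMap.range (P₂' - W).mulVecLin ⊔ (ℝ ∙ v) := by
      apply le_antisymm
      · rintro x ⟨y, rfl⟩
        rw [Matrix.mulVecLin_apply]
        have : P₂' *ᵥ y = (P₂' - W) *ᵥ y + (c * (v ⬝ᵥ y)) • v := by
          rw [Matrix.sub_mulVec, hWx, sub_add_cancel]
        rw [this]
        exact Submodule.add_mem_sup ⟨y, rfl⟩
          (Submodule.smul_mem _ _ (Submodule.mem_span_singleton_self v))
      · refine sup_le ?_ ?_
        · rintro x ⟨y, rfl⟩
          exact ⟨(P₂' - W) *ᵥ y, by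
            rw [Matrix.mulVecLin_apply, Matrix.mulVecLin_apply, Matrix.mulVec_mulVec, hP₂'P₂]⟩
        · rw [Submodule.span_singleton_le_iff_mem]
          exact ⟨v, by rw [Matrix.mulVecLin_apply, hv2]⟩
    have hdisj : LinearMap.range (P₂' - W).mulVecLin ⊓ (ℝ ∙ v) = ⊥ := by
      rw [Submodule.eq_bot_iff]
      rintro x ⟨⟨y, rfl⟩, hx2⟩
      obtain ⟨a, ha⟩ := Submodule.mem_span_singleton.mp hx2
      rw [Matrix.mulVecLin_apply] at ha ⊢
      have hidem : (P₂' - W) * (P₂' - W) = P₂' - W := by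
        rw [Matrix.sub_mul, Matrix.mul_sub, Matrix.mul_sub, h2p, h2W, hW2, hWW, sub_self,
          sub_zero]
      have h' : (P₂' - W) *ᵥ ((P₂' - W) *ᵥ y) = (P₂' - W) *ᵥ y := by
        rw [Matrix.mulVec_mulVec, hidem]
      rw [← h', ← ha, Matrix.mulVec_smul, hP₂v, smul_zero]
    have := Submodule.finrank_sup_add_finrank_inf_eq
      (LinearMap.range (P₂' - W).mulVecLin) (ℝ ∙ v)
    rw [hdisj, finrank_span_singleton hv0] at this
    have hr2 : P₂'.rank = Module.finrank ℝ ↥(LinearMap.range (P₂' - W).mulVecLin ⊔ (ℝ ∙ v)) := by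
      rw [Matrix.rank, hrange]
    rw [hr2] at h2r
    have hR : (P₂' - W).rank = Module.finrank ℝ (LinearMap.range (P₂' - W).mulVecLin) := rfl
    rw [hR]
    simp only [finrank_bot] at this
    omega
  · abel
  · -- product 1
    rw [Matrix.add_mul, Matrix.mul_sub, Matrix.mul_sub, h1W, hW2, hWW, sub_zero, sub_self,
      add_zero]
  · -- product 2
    rw [Matrix.sub_mul, Matrix.mul_add, Matrix.mul_add, hW1, h2W, hWW]
    abel
end

section
/- For n ≥ 1, the set K₂(n), viewed as a subset of the space of quadruples of n×n real matrices with its Euclidean topology, has at least 2(n+1)² connected components; that is, the set of connected components of K₂(n) has cardinality at least 2(n+1)². -/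
open Matrix

def K2 (n : ℕ) : Set (Matrix (Fin n) (Fin n) ℝ × Matrix (Fin n) (Fin n) ℝ ×
    Matrix (Fin n) (Fin n) ℝ × Matrix (Fin n) (Fin n) ℝ) :=
  {A | A.1 * A.2.2.2ᵀ = 0 ∧ A.2.1 * A.2.2.1ᵀ = 0 ∧
    A.1 * A.2.1ᵀ + A.2.2.1 * A.2.2.2ᵀ = 0 ∧
    A.1 * A.2.2.1ᵀ + A.2.1 * A.2.2.2ᵀ = 0 ∧
    A.1 * A.1ᵀ + A.2.1 * A.2.1ᵀ + A.2.2.1 * A.2.2.1ᵀ + A.2.2.2 * A.2.2.2ᵀ = 1}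

namespace K2Aux

/-- rank subadditivity from orthogonality of row spaces -/
lemma rank_add_rank_le {n : ℕ} {P Q : Matrix (Fin n) (Fin n) ℝ} (h : P * Qᵀ = 0) :
    P.rank + Q.rank ≤ n := by
  have hcomp : P.mulVecLin.comp Qᵀ.mulVecLin = 0 := by
    rw [← Matrix.mulVecLin_mul, h, Matrix.mulVecLin_zero]
  have hle : LinearMap.range Qᵀ.mulVecLin ≤ LinearMap.ker P.mulVecLin :=
    LinearMap.range_le_ker_iff.mpr hcomp
  have h1 : Qᵀ.rank ≤ Module.finrank ℝ (LinearMap.ker P.mulVecLin) :=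
    Submodule.finrank_mono hle
  have h2 := LinearMap.finrank_range_add_finrank_ker P.mulVecLin
  rw [Q.rank_transpose] at h1
  have h3 : Module.finrank ℝ (Fin n → ℝ) = n := Module.finrank_fin_fun ℝ
  have h4 : P.rank = Module.finrank ℝ (LinearMap.range P.mulVecLin) := rfl
  omega

lemma trace_le_rank {n : ℕ} {E : Matrix (Fin n) (Fin n) ℝ} (hE : E.PosSemidef)
    (hF : (1 - E).PosSemidef) : E.trace ≤ (E.rank : ℝ) := by
  have hH := hE.1
  set μ := hH.eigenvalues with hμ
  have hnonneg : ∀ i, 0 ≤ μ i := hE.eigenvalues_nonneg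
  have hle1 : ∀ i, μ i ≤ 1 := by
    intro i
    set v : EuclideanSpace ℝ (Fin n) := hH.eigenvectorBasis i with hv
    set w : Fin n → ℝ := ⇑(hH.eigenvectorBasis i) with hw
    have h0 : (inner ℝ v v : ℝ) = dotProduct (star w) w :=
      (EuclideanSpace.inner_eq_star_dotProduct v v).trans (dotProduct_comm _ _)
    have hnorm := hH.eigenvectorBasis.orthonormal.1 i
    have hvv : dotProduct (star w) w = 1 := by
      rw [← h0, real_inner_self_eq_norm_sq, hnorm]; norm_num
    have heig : E *ᵥ w = μ i • w := hH.mulVec_eigenvectorBasis i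
    have hF2 := hF.dotProduct_mulVec_nonneg w
    rw [sub_mulVec, one_mulVec, dotProduct_sub, heig, dotProduct_smul, hvv] at hF2
    simp only [smul_eq_mul, hvv, mul_one] at hF2
    linarith
  have htr : E.trace = ∑ i, μ i := by
    conv_lhs => rw [hH.spectral_theorem]
    rw [Unitary.conjStarAlgAut_apply]
    rw [Matrix.trace_mul_cycle]
    rw [show (star (hH.eigenvectorUnitary : Matrix (Fin n) (Fin n) ℝ)) *
        (hH.eigenvectorUnitary : Matrix (Fin n) (Fin n) ℝ) = 1 from
      (Matrix.mem_unitaryGroup_iff'.mp hH.eigenvectorUnitary.2)]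
    simp [Matrix.trace_diagonal, hμ]
  have hrank : E.rank = Fintype.card {i // μ i ≠ 0} := hH.rank_eq_card_non_zero_eigs
  rw [htr, hrank]
  calc ∑ i, μ i = ∑ i ∈ Finset.univ.filter (fun i => μ i ≠ 0), μ i := by
        rw [Finset.sum_filter_ne_zero]
    _ ≤ ∑ _i ∈ Finset.univ.filter (fun i => μ i ≠ 0), (1:ℝ) :=
        Finset.sum_le_sum (fun i _ => hle1 i)
    _ = (Finset.univ.filter (fun i => μ i ≠ 0)).card := by simp
    _ = (Fintype.card {i // μ i ≠ 0} : ℝ) := by rw [Fintype.card_subtype]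

lemma trace_eq_rank {n : ℕ} {P Q : Matrix (Fin n) (Fin n) ℝ} (h1 : P * Qᵀ = 0)
    (h2 : P * Pᵀ + Q * Qᵀ = 1) : ∃ k : ℕ, k ≤ n ∧ (Q * Qᵀ).trace = k := by
  have hQpsd : (Q * Qᵀ).PosSemidef := by
    have := Matrix.posSemidef_self_mul_conjTranspose Q
    simpa using this
  have hPpsd : (P * Pᵀ).PosSemidef := by
    have := Matrix.posSemidef_self_mul_conjTranspose P
    simpa using this
  have e1 : (1 : Matrix (Fin n) (Fin n) ℝ) - Q * Qᵀ = P * Pᵀ := by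
    rw [← h2]; abel
  have e2 : (1 : Matrix (Fin n) (Fin n) ℝ) - P * Pᵀ = Q * Qᵀ := by
    rw [← h2]; abel
  have ha : (Q * Qᵀ).trace ≤ ((Q * Qᵀ).rank : ℝ) :=
    trace_le_rank hQpsd (by rw [e1]; exact hPpsd)
  have hb : (P * Pᵀ).trace ≤ ((P * Pᵀ).rank : ℝ) :=
    trace_le_rank hPpsd (by rw [e2]; exact hQpsd)
  rw [Q.rank_self_mul_transpose] at ha
  rw [P.rank_self_mul_transpose] at hb
  have hsum : (Q * Qᵀ).trace + (P * Pᵀ).trace = n := by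
    have := congrArg Matrix.trace h2
    rw [Matrix.trace_add, Matrix.trace_one] at this
    simpa [add_comm] using this
  have hrk := rank_add_rank_le h1
  have hrkR : (P.rank : ℝ) + (Q.rank : ℝ) ≤ (n : ℝ) := by exact_mod_cast hrk
  refine ⟨Q.rank, by omega, by linarith⟩

lemma k2_pairs {n : ℕ} {A : Matrix (Fin n) (Fin n) ℝ × Matrix (Fin n) (Fin n) ℝ ×
    Matrix (Fin n) (Fin n) ℝ × Matrix (Fin n) (Fin n) ℝ} (hA : A ∈ K2 n) :
    ((A.1 + A.2.2.1) * (A.2.1 + A.2.2.2)ᵀ = 0 ∧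
      (A.1 + A.2.2.1) * (A.1 + A.2.2.1)ᵀ + (A.2.1 + A.2.2.2) * (A.2.1 + A.2.2.2)ᵀ = 1) ∧
    ((A.1 + A.2.1) * (A.2.2.1 + A.2.2.2)ᵀ = 0 ∧
      (A.1 + A.2.1) * (A.1 + A.2.1)ᵀ + (A.2.2.1 + A.2.2.2) * (A.2.2.1 + A.2.2.2)ᵀ = 1) ∧
    (A.1 + A.2.1 + A.2.2.1 + A.2.2.2) * (A.1 + A.2.1 + A.2.2.1 + A.2.2.2)ᵀ = 1 := by
  obtain ⟨A1, A2, A3, A4⟩ := A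
  obtain ⟨h1, h2, h3, h4, h5⟩ := hA
  simp only at h1 h2 h3 h4 h5 ⊢
  have th1 : A4 * A1ᵀ = 0 := by
    have := congrArg transpose h1; simpa [transpose_mul] using this
  have th2 : A3 * A2ᵀ = 0 := by
    have := congrArg transpose h2; simpa [transpose_mul] using this
  have th3 : A2 * A1ᵀ + A4 * A3ᵀ = 0 := by
    have := congrArg transpose h3; simpa [transpose_mul, transpose_add] using this
  have th4 : A3 * A1ᵀ + A4 * A2ᵀ = 0 := by
    have := congrArg transpose h4; simpa [transpose_mul, transpose_add] using this
  refine ⟨⟨?_, ?_⟩, ⟨?_, ?_⟩, ?_⟩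
  · calc (A1 + A3) * (A2 + A4)ᵀ
        = (A1 * A2ᵀ + A3 * A4ᵀ) + A1 * A4ᵀ + A3 * A2ᵀ := by
          rw [transpose_add]; noncomm_ring
      _ = 0 := by rw [h3, h1, th2]; simp
  · calc (A1 + A3) * (A1 + A3)ᵀ + (A2 + A4) * (A2 + A4)ᵀ
        = (A1 * A1ᵀ + A2 * A2ᵀ + A3 * A3ᵀ + A4 * A4ᵀ)
          + (A1 * A3ᵀ + A2 * A4ᵀ) + (A3 * A1ᵀ + A4 * A2ᵀ) := by
          rw [transpose_add, transpose_add]; noncomm_ring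
      _ = 1 := by rw [h5, h4, th4]; simp
  · calc (A1 + A2) * (A3 + A4)ᵀ
        = (A1 * A3ᵀ + A2 * A4ᵀ) + A1 * A4ᵀ + A2 * A3ᵀ := by
          rw [transpose_add]; noncomm_ring
      _ = 0 := by rw [h4, h1, h2]; simp
  · calc (A1 + A2) * (A1 + A2)ᵀ + (A3 + A4) * (A3 + A4)ᵀ
        = (A1 * A1ᵀ + A2 * A2ᵀ + A3 * A3ᵀ + A4 * A4ᵀ)
          + (A1 * A2ᵀ + A3 * A4ᵀ) + (A2 * A1ᵀ + A4 * A3ᵀ) := by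
          rw [transpose_add, transpose_add]; noncomm_ring
      _ = 1 := by rw [h5, h3, th3]; simp
  · calc (A1 + A2 + A3 + A4) * (A1 + A2 + A3 + A4)ᵀ
        = (A1 * A1ᵀ + A2 * A2ᵀ + A3 * A3ᵀ + A4 * A4ᵀ)
          + (A1 * A2ᵀ + A3 * A4ᵀ) + (A2 * A1ᵀ + A4 * A3ᵀ)
          + (A1 * A3ᵀ + A2 * A4ᵀ) + (A3 * A1ᵀ + A4 * A2ᵀ)
          + A1 * A4ᵀ + A4 * A1ᵀ + A2 * A3ᵀ + A3 * A2ᵀ := by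
          rw [transpose_add, transpose_add, transpose_add]; noncomm_ring
      _ = 1 := by rw [h5, h3, th3, h4, th4, h1, th1, h2, th2]; simp

/-- sign function for base points -/
def sgn (n : ℕ) (e : ℝ) : Fin n → ℝ := fun k => if (k : ℕ) = 0 then e else 1

/-- base points -/
def bp (n i j : ℕ) (e : ℝ) : (Matrix (Fin n) (Fin n) ℝ × Matrix (Fin n) (Fin n) ℝ ×
    Matrix (Fin n) (Fin n) ℝ × Matrix (Fin n) (Fin n) ℝ) :=
  (diagonal (fun k => if i ≤ (k:ℕ) ∧ j ≤ (k:ℕ) then sgn n e k else 0),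
   diagonal (fun k => if (k:ℕ) < i ∧ j ≤ (k:ℕ) then sgn n e k else 0),
   diagonal (fun k => if i ≤ (k:ℕ) ∧ (k:ℕ) < j then sgn n e k else 0),
   diagonal (fun k => if (k:ℕ) < i ∧ (k:ℕ) < j then sgn n e k else 0))

lemma sgn_sq {n : ℕ} {e : ℝ} (he : e = 1 ∨ e = -1) (k : Fin n) :
    sgn n e k * sgn n e k = 1 := by
  unfold sgn; split_ifs <;> rcases he with rfl | rfl <;> norm_num

lemma bp_mem {n i j : ℕ} {e : ℝ} (he : e = 1 ∨ e = -1) : bp n i j e ∈ K2 n := by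
  refine ⟨?_, ?_, ?_, ?_, ?_⟩ <;>
  · simp only [bp, diagonal_transpose, diagonal_mul_diagonal, diagonal_add]
    first
    | (rw [show (0 : Matrix (Fin n) (Fin n) ℝ) = diagonal (fun _ => 0) by simp]
       apply congrArg Matrix.diagonal; funext k
       split_ifs <;> simp <;> omega)
    | (rw [show (1 : Matrix (Fin n) (Fin n) ℝ) = diagonal (fun _ => 1) by simp]
       apply congrArg Matrix.diagonal; funext k
       have := sgn_sq he k
       split_ifs <;> simp_all <;> omega)

lemma sum_indicator {n i : ℕ} (hi : i ≤ n) :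
    ∑ k : Fin n, (if (k : ℕ) < i then (1:ℝ) else 0) = i := by
  rw [Finset.sum_boole]
  congr 1
  have : Finset.univ.filter (fun k : Fin n => (k:ℕ) < i) =
      (Finset.range i).attachFin (fun m hm => lt_of_lt_of_le (Finset.mem_range.mp hm) hi) := by
    ext k
    simp [Finset.mem_attachFin]
  rw [this, Finset.card_attachFin, Finset.card_range]

lemma bp_tr1 {n i j : ℕ} {e : ℝ} (hi : i ≤ n) (he : e = 1 ∨ e = -1) :
    (((bp n i j e).2.1 + (bp n i j e).2.2.2) *
      ((bp n i j e).2.1 + (bp n i j e).2.2.2)ᵀ).trace = i := by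
  simp only [bp]
  rw [diagonal_add, diagonal_transpose, diagonal_mul_diagonal, trace_diagonal]
  rw [← sum_indicator hi]
  refine Finset.sum_congr rfl fun k _ => ?_
  have := sgn_sq he k
  split_ifs <;> simp_all <;> omega

lemma bp_tr2 {n i j : ℕ} {e : ℝ} (hj : j ≤ n) (he : e = 1 ∨ e = -1) :
    (((bp n i j e).2.2.1 + (bp n i j e).2.2.2) *
      ((bp n i j e).2.2.1 + (bp n i j e).2.2.2)ᵀ).trace = j := by
  simp only [bp]
  rw [diagonal_add, diagonal_transpose, diagonal_mul_diagonal, trace_diagonal]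
  rw [← sum_indicator hj]
  refine Finset.sum_congr rfl fun k _ => ?_
  have := sgn_sq he k
  split_ifs <;> simp_all <;> omega

lemma bp_det {n i j : ℕ} {e : ℝ} (hn : 1 ≤ n) :
    ((bp n i j e).1 + (bp n i j e).2.1 + (bp n i j e).2.2.1 + (bp n i j e).2.2.2).det = e := by
  simp only [bp]
  rw [diagonal_add, diagonal_add, diagonal_add, det_diagonal]
  have h1 : ∀ k : Fin n, (((if i ≤ (k:ℕ) ∧ j ≤ (k:ℕ) then sgn n e k else 0)
      + (if (k:ℕ) < i ∧ j ≤ (k:ℕ) then sgn n e k else 0))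
      + (if i ≤ (k:ℕ) ∧ (k:ℕ) < j then sgn n e k else 0))
      + (if (k:ℕ) < i ∧ (k:ℕ) < j then sgn n e k else 0) = sgn n e k := by
    intro k; split_ifs <;> simp <;> omega
  rw [Finset.prod_congr rfl fun k _ => h1 k]
  rw [Finset.prod_eq_single (⟨0, hn⟩ : Fin n)]
  · simp [sgn]
  · intro b _ hb
    have : (b : ℕ) ≠ 0 := fun h => hb (Fin.ext h)
    simp [sgn, this]
  · simp

lemma const_on_comp {X : Type*} [TopologicalSpace X] {g : X → ℝ} (hg : Continuous g)
    (S : Set ℝ) (hval : ∀ x, g x ∈ S)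
    (hgap : ∀ a ∈ S, ∀ b ∈ S, a < b → ∃ c, a < c ∧ c < b ∧ c ∉ S)
    {x y : X} (h : (ConnectedComponents.mk x) = ConnectedComponents.mk y) : g x = g y := by
  have hy : x ∈ connectedComponent y := ConnectedComponents.coe_eq_coe'.mp h
  have hx : y ∈ connectedComponent y := mem_connectedComponent
  have hpre : IsPreconnected (g '' connectedComponent y) :=
    (isPreconnected_connectedComponent).image g hg.continuousOn
  have hsub : g '' connectedComponent y ⊆ S := by
    rintro - ⟨z, -, rfl⟩; exact hval z
  by_contra hne
  have hmem1 : g x ∈ g '' connectedComponent y := ⟨x, hy, rfl⟩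
  have hmem2 : g y ∈ g '' connectedComponent y := ⟨y, hx, rfl⟩
  rcases lt_or_gt_of_ne hne with hlt | hlt
  · obtain ⟨c, hc1, hc2, hc3⟩ := hgap _ (hval x) _ (hval y) hlt
    exact hc3 (hsub (hpre.Icc_subset hmem1 hmem2 ⟨le_of_lt hc1, le_of_lt hc2⟩))
  · obtain ⟨c, hc1, hc2, hc3⟩ := hgap _ (hval y) _ (hval x) hlt
    exact hc3 (hsub (hpre.Icc_subset hmem2 hmem1 ⟨le_of_lt hc1, le_of_lt hc2⟩))

lemma gapN (n : ℕ) : ∀ a ∈ {r : ℝ | ∃ k : ℕ, k ≤ n ∧ r = k},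
    ∀ b ∈ {r : ℝ | ∃ k : ℕ, k ≤ n ∧ r = k}, a < b →
    ∃ c, a < c ∧ c < b ∧ c ∉ {r : ℝ | ∃ k : ℕ, k ≤ n ∧ r = k} := by
  rintro - ⟨k1, -, rfl⟩ - ⟨k2, -, rfl⟩ hab
  have hk : k1 < k2 := by exact_mod_cast hab
  refine ⟨k1 + 1/2, by linarith, ?_, ?_⟩
  · have : (k1 : ℝ) + 1 ≤ k2 := by exact_mod_cast hk
    linarith
  · rintro ⟨m, -, hm⟩
    have h1 : (k1 : ℝ) < m := by rw [← hm]; linarith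
    have h2 : k1 < m := by exact_mod_cast h1
    have h3 : (k1 : ℝ) + 1 ≤ m := by exact_mod_cast h2
    rw [← hm] at h3
    linarith

lemma gapS : ∀ a ∈ {r : ℝ | r = 1 ∨ r = -1}, ∀ b ∈ {r : ℝ | r = 1 ∨ r = -1}, a < b →
    ∃ c, a < c ∧ c < b ∧ c ∉ {r : ℝ | r = 1 ∨ r = -1} := by
  rintro a ha b hb hab
  rcases ha with rfl | rfl <;> rcases hb with rfl | rfl <;> try linarith
  exact ⟨0, by norm_num, by norm_num, by norm_num⟩

end K2Aux

open K2Aux in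
theorem stmt17 (n : ℕ) (hn : 1 ≤ n) :
    ((2 * (n + 1) ^ 2 : ℕ) : Cardinal) ≤ Cardinal.mk (ConnectedComponents ↥(K2 n)) := by
  classical
  -- the three invariants
  set g1 : ↥(K2 n) → ℝ := fun x =>
    ((x.val.2.1 + x.val.2.2.2) * (x.val.2.1 + x.val.2.2.2)ᵀ).trace with hg1
  set g2 : ↥(K2 n) → ℝ := fun x =>
    ((x.val.2.2.1 + x.val.2.2.2) * (x.val.2.2.1 + x.val.2.2.2)ᵀ).trace with hg2
  set g3 : ↥(K2 n) → ℝ := fun x =>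
    (x.val.1 + x.val.2.1 + x.val.2.2.1 + x.val.2.2.2).det with hg3
  have hc1 : Continuous g1 := by
    apply Continuous.matrix_trace
    apply Continuous.matrix_mul
    · exact (continuous_subtype_val.snd.fst.add continuous_subtype_val.snd.snd.snd)
    · exact (continuous_subtype_val.snd.fst.add continuous_subtype_val.snd.snd.snd).matrix_transpose
  have hc2 : Continuous g2 := by
    apply Continuous.matrix_trace
    apply Continuous.matrix_mul
    · exact (continuous_subtype_val.snd.snd.fst.add continuous_subtype_val.snd.snd.snd)
    · exact (continuous_subtype_val.snd.snd.fst.add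
        continuous_subtype_val.snd.snd.snd).matrix_transpose
  have hc3 : Continuous g3 := by
    apply Continuous.matrix_det
    exact ((continuous_subtype_val.fst.add continuous_subtype_val.snd.fst).add
      continuous_subtype_val.snd.snd.fst).add continuous_subtype_val.snd.snd.snd
  -- values of the invariants
  have hval1 : ∀ x : ↥(K2 n), g1 x ∈ {r : ℝ | ∃ k : ℕ, k ≤ n ∧ r = k} := by
    intro x
    obtain ⟨⟨hp, hs⟩, -, -⟩ := k2_pairs x.2
    obtain ⟨k, hk, htr⟩ := trace_eq_rank hp hs
    exact ⟨k, hk, htr⟩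
  have hval2 : ∀ x : ↥(K2 n), g2 x ∈ {r : ℝ | ∃ k : ℕ, k ≤ n ∧ r = k} := by
    intro x
    obtain ⟨-, ⟨hp, hs⟩, -⟩ := k2_pairs x.2
    obtain ⟨k, hk, htr⟩ := trace_eq_rank hp hs
    exact ⟨k, hk, htr⟩
  have hval3 : ∀ x : ↥(K2 n), g3 x ∈ {r : ℝ | r = 1 ∨ r = -1} := by
    intro x
    obtain ⟨-, -, ho⟩ := k2_pairs x.2
    have := congrArg Matrix.det ho
    rw [det_mul, det_transpose, det_one] at this
    exact mul_self_eq_one_iff.mp this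
  -- the injection
  set e : Bool → ℝ := fun b => if b then 1 else -1 with he
  have heval : ∀ b, e b = 1 ∨ e b = -1 := by
    intro b; cases b <;> simp [he]
  set J : Fin (n+1) × Fin (n+1) × Bool → ConnectedComponents ↥(K2 n) := fun p =>
    ConnectedComponents.mk ⟨bp n p.1 p.2.1 (e p.2.2), bp_mem (heval p.2.2)⟩ with hJ
  have hJinj : Function.Injective J := by
    rintro ⟨i, j, b⟩ ⟨i', j', b'⟩ h
    simp only [hJ] at h
    have e1 := const_on_comp hc1 _ hval1 (gapN n) h
    have e2 := const_on_comp hc2 _ hval2 (gapN n) h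
    have e3 := const_on_comp hc3 _ hval3 gapS h
    simp only [hg1, hg2, hg3] at e1 e2 e3
    rw [bp_tr1 (by omega : (i:ℕ) ≤ n) (heval b), bp_tr1 (by omega : (i':ℕ) ≤ n) (heval b')] at e1
    rw [bp_tr2 (by omega : (j:ℕ) ≤ n) (heval b), bp_tr2 (by omega : (j':ℕ) ≤ n) (heval b')] at e2
    rw [bp_det hn, bp_det hn] at e3
    have hi : i = i' := by
      have : (i : ℕ) = (i' : ℕ) := by exact_mod_cast e1
      exact Fin.ext this
    have hj : j = j' := by
      have : (j : ℕ) = (j' : ℕ) := by exact_mod_cast e2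
      exact Fin.ext this
    have hb : b = b' := by
      cases b <;> cases b' <;> simp only [he] at e3 <;> first | rfl | norm_num at e3
    rw [hi, hj, hb]
  calc ((2 * (n + 1) ^ 2 : ℕ) : Cardinal)
      = Cardinal.mk (Fin (n+1) × Fin (n+1) × Bool) := by
        simp [Cardinal.mk_fintype]
        push_cast
        ring
    _ ≤ Cardinal.mk (ConnectedComponents ↥(K2 n)) := Cardinal.mk_le_of_injective hJinj
end

section
/- (i) If (A_1, A_2, A_3, A_4) ∈ K₂(n), then S = A_1 + A_2 + A_3 + A_4 is orthogonal (SᵀS = I), and both Sᵀ(A_1 + A_2) and Sᵀ(A_1 + A_3) are symmetric projectors. (ii) Conversely, for any symmetric projectors P, Q and any orthogonal n×n real matrix H (HᵀH = I), the quadruple (H·P·Q, H·P·(I−Q), H·(I−P)·Q, H·(I−P)·(I−Q)) belongs to K₂(n), its four entries sum to H, and with S = H one has Sᵀ(A_1 + A_2) = P and Sᵀ(A_1 + A_3) = Q. -/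
open Matrix

lemma sp_aux {n : ℕ} (S A : Matrix (Fin n) (Fin n) ℝ) (h1 : Sᵀ * S = 1)
    (h2 : S * Sᵀ = 1) (key : A * Sᵀ = A * Aᵀ) : IsSymProj n (Sᵀ * A) := by
  have keyt : S * Aᵀ = A * Aᵀ := by
    have := congrArg Matrix.transpose key
    simpa [Matrix.transpose_mul] using this
  have hMM : (A * Aᵀ) * (A * Aᵀ) = A * Aᵀ := by
    calc (A * Aᵀ) * (A * Aᵀ) = (A * Sᵀ) * (S * Aᵀ) := by rw [key, keyt]
    _ = A * (Sᵀ * S) * Aᵀ := by noncomm_ring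
    _ = A * Aᵀ := by rw [h1]; noncomm_ring
  have hE : Sᵀ * A = Sᵀ * (A * Aᵀ) * S := by
    calc Sᵀ * A = Sᵀ * (A * (Sᵀ * S)) := by rw [h1]; noncomm_ring
    _ = Sᵀ * (A * Sᵀ) * S := by noncomm_ring
    _ = Sᵀ * (A * Aᵀ) * S := by rw [key]
  constructor
  · calc (Sᵀ * A) * (Sᵀ * A) = (Sᵀ * (A * Aᵀ) * S) * (Sᵀ * (A * Aᵀ) * S) := by rw [hE]
    _ = Sᵀ * (A * Aᵀ) * (S * Sᵀ) * (A * Aᵀ) * S := by noncomm_ring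
    _ = Sᵀ * ((A * Aᵀ) * (A * Aᵀ)) * S := by rw [h2]; noncomm_ring
    _ = Sᵀ * (A * Aᵀ) * S := by rw [hMM]
    _ = Sᵀ * A := hE.symm
  · rw [hE]
    simp [Matrix.transpose_mul, Matrix.mul_assoc]

theorem stmt18 (n : ℕ) (hn : 1 ≤ n) :
    (∀ A₁ A₂ A₃ A₄ : Matrix (Fin n) (Fin n) ℝ, (A₁, A₂, A₃, A₄) ∈ K2 n →
      (A₁ + A₂ + A₃ + A₄)ᵀ * (A₁ + A₂ + A₃ + A₄) = 1 ∧
      IsSymProj n ((A₁ + A₂ + A₃ + A₄)ᵀ * (A₁ + A₂)) ∧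
      IsSymProj n ((A₁ + A₂ + A₃ + A₄)ᵀ * (A₁ + A₃))) ∧
    (∀ P Q H : Matrix (Fin n) (Fin n) ℝ, IsSymProj n P → IsSymProj n Q →
      Hᵀ * H = 1 →
      (H * P * Q, H * P * (1 - Q), H * (1 - P) * Q, H * (1 - P) * (1 - Q)) ∈ K2 n ∧
      H * P * Q + H * P * (1 - Q) + H * (1 - P) * Q + H * (1 - P) * (1 - Q) = H ∧
      Hᵀ * (H * P * Q + H * P * (1 - Q)) = P ∧
      Hᵀ * (H * P * Q + H * (1 - P) * Q) = Q) := by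
  constructor
  · intro A₁ A₂ A₃ A₄ h
    obtain ⟨h1, h2, h3, h4, h5⟩ := h
    have h1t : A₄ * A₁ᵀ = 0 := by
      have := congrArg Matrix.transpose h1
      simpa [Matrix.transpose_mul] using this
    have h2t : A₃ * A₂ᵀ = 0 := by
      have := congrArg Matrix.transpose h2
      simpa [Matrix.transpose_mul] using this
    have h3t : A₂ * A₁ᵀ + A₄ * A₃ᵀ = 0 := by
      have := congrArg Matrix.transpose h3
      simpa [Matrix.transpose_mul, Matrix.transpose_add] using this
    have h4t : A₃ * A₁ᵀ + A₄ * A₂ᵀ = 0 := by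
      have := congrArg Matrix.transpose h4
      simpa [Matrix.transpose_mul, Matrix.transpose_add] using this
    have hSS : (A₁ + A₂ + A₃ + A₄) * (A₁ + A₂ + A₃ + A₄)ᵀ = 1 := by
      have expand : (A₁ + A₂ + A₃ + A₄) * (A₁ + A₂ + A₃ + A₄)ᵀ =
          (A₁ * A₁ᵀ + A₂ * A₂ᵀ + A₃ * A₃ᵀ + A₄ * A₄ᵀ) +
          ((A₁ * A₂ᵀ + A₃ * A₄ᵀ) + ((A₂ * A₁ᵀ + A₄ * A₃ᵀ) +
            ((A₁ * A₃ᵀ + A₂ * A₄ᵀ) + ((A₃ * A₁ᵀ + A₄ * A₂ᵀ) +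
              (A₁ * A₄ᵀ + (A₄ * A₁ᵀ + (A₂ * A₃ᵀ + A₃ * A₂ᵀ))))))) := by
        simp only [Matrix.transpose_add]; noncomm_ring
      rw [expand, h5, h3, h3t, h4, h4t, h1, h1t, h2, h2t]; simp
    have hStS : (A₁ + A₂ + A₃ + A₄)ᵀ * (A₁ + A₂ + A₃ + A₄) = 1 :=
      mul_eq_one_comm.mp hSS
    have key1 : (A₁ + A₂) * (A₁ + A₂ + A₃ + A₄)ᵀ = (A₁ + A₂) * (A₁ + A₂)ᵀ := by
      have expand : (A₁ + A₂) * (A₁ + A₂ + A₃ + A₄)ᵀ =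
          (A₁ + A₂) * (A₁ + A₂)ᵀ +
            ((A₁ * A₃ᵀ + A₂ * A₄ᵀ) + (A₁ * A₄ᵀ + A₂ * A₃ᵀ)) := by
        simp only [Matrix.transpose_add]; noncomm_ring
      rw [expand, h4, h1, h2]; simp
    have key2 : (A₁ + A₃) * (A₁ + A₂ + A₃ + A₄)ᵀ = (A₁ + A₃) * (A₁ + A₃)ᵀ := by
      have expand : (A₁ + A₃) * (A₁ + A₂ + A₃ + A₄)ᵀ =
          (A₁ + A₃) * (A₁ + A₃)ᵀ +
            ((A₁ * A₂ᵀ + A₃ * A₄ᵀ) + (A₁ * A₄ᵀ + A₃ * A₂ᵀ)) := by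
        simp only [Matrix.transpose_add]; noncomm_ring
      rw [expand, h3, h1, h2t]; simp
    exact ⟨hStS, sp_aux _ _ hStS hSS key1, sp_aux _ _ hStS hSS key2⟩
  · intro P Q H hP hQ hH
    obtain ⟨hP1, hPt⟩ := hP
    obtain ⟨hQ1, hQt⟩ := hQ
    have hHH : H * Hᵀ = 1 := mul_eq_one_comm.mp hH
    have tP : (1 - P)ᵀ = 1 - P := by simp [hPt]
    have tQ : (1 - Q)ᵀ = 1 - Q := by simp [hQt]
    have hQ0 : Q * (1 - Q) = 0 := by rw [mul_sub, mul_one, hQ1, sub_self]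
    have h0Q : (1 - Q) * Q = 0 := by rw [sub_mul, one_mul, hQ1, sub_self]
    have hQQ : (1 - Q) * (1 - Q) = 1 - Q := by
      have e : (1 - Q) * (1 - Q) = (1 - Q) - (Q - Q * Q) := by noncomm_ring
      rw [e, hQ1]; simp
    have hP0 : P * (1 - P) = 0 := by rw [mul_sub, mul_one, hP1, sub_self]
    have hPP : (1 - P) * (1 - P) = 1 - P := by
      have e : (1 - P) * (1 - P) = (1 - P) - (P - P * P) := by noncomm_ring
      rw [e, hP1]; simp
    have c1 : (H * P * Q) * (H * (1 - P) * (1 - Q))ᵀ = 0 := by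
      have e : (H * P * Q) * (H * (1 - P) * (1 - Q))ᵀ =
          H * P * (Q * (1 - Q)) * ((1 - P) * Hᵀ) := by
        simp only [Matrix.transpose_mul, tP, tQ, hPt, hQt]; noncomm_ring
      rw [e, hQ0]; simp
    have c2 : (H * P * (1 - Q)) * (H * (1 - P) * Q)ᵀ = 0 := by
      have e : (H * P * (1 - Q)) * (H * (1 - P) * Q)ᵀ =
          H * P * ((1 - Q) * Q) * ((1 - P) * Hᵀ) := by
        simp only [Matrix.transpose_mul, tP, tQ, hPt, hQt]; noncomm_ring
      rw [e, h0Q]; simp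
    have c3 : (H * P * Q) * (H * P * (1 - Q))ᵀ +
        (H * (1 - P) * Q) * (H * (1 - P) * (1 - Q))ᵀ = 0 := by
      have e : (H * P * Q) * (H * P * (1 - Q))ᵀ +
          (H * (1 - P) * Q) * (H * (1 - P) * (1 - Q))ᵀ =
          H * P * (Q * (1 - Q)) * (P * Hᵀ) +
            H * (1 - P) * (Q * (1 - Q)) * ((1 - P) * Hᵀ) := by
        simp only [Matrix.transpose_mul, tP, tQ, hPt, hQt]; noncomm_ring
      rw [e, hQ0]; simp
    have c4 : (H * P * Q) * (H * (1 - P) * Q)ᵀ +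
        (H * P * (1 - Q)) * (H * (1 - P) * (1 - Q))ᵀ = 0 := by
      have e : (H * P * Q) * (H * (1 - P) * Q)ᵀ +
          (H * P * (1 - Q)) * (H * (1 - P) * (1 - Q))ᵀ =
          H * (P * (Q * Q) * (1 - P) + P * ((1 - Q) * (1 - Q)) * (1 - P)) * Hᵀ := by
        simp only [Matrix.transpose_mul, tP, tQ, hPt, hQt]; noncomm_ring
      rw [e, hQ1, hQQ]
      have e2 : P * Q * (1 - P) + P * (1 - Q) * (1 - P) = P * (1 - P) := by noncomm_ring
      rw [e2, hP0]; simp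
    have c5 : (H * P * Q) * (H * P * Q)ᵀ + (H * P * (1 - Q)) * (H * P * (1 - Q))ᵀ +
        (H * (1 - P) * Q) * (H * (1 - P) * Q)ᵀ +
        (H * (1 - P) * (1 - Q)) * (H * (1 - P) * (1 - Q))ᵀ = 1 := by
      have e : (H * P * Q) * (H * P * Q)ᵀ + (H * P * (1 - Q)) * (H * P * (1 - Q))ᵀ +
          (H * (1 - P) * Q) * (H * (1 - P) * Q)ᵀ +
          (H * (1 - P) * (1 - Q)) * (H * (1 - P) * (1 - Q))ᵀ =
          H * (P * (Q * Q) * P + P * ((1 - Q) * (1 - Q)) * P +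
            (1 - P) * (Q * Q) * (1 - P) + (1 - P) * ((1 - Q) * (1 - Q)) * (1 - P)) * Hᵀ := by
        simp only [Matrix.transpose_mul, tP, tQ, hPt, hQt]; noncomm_ring
      rw [e, hQ1, hQQ]
      have e2 : P * Q * P + P * (1 - Q) * P + (1 - P) * Q * (1 - P) +
          (1 - P) * (1 - Q) * (1 - P) = P * P + (1 - P) * (1 - P) := by noncomm_ring
      rw [e2, hP1, hPP]
      have e3 : P + (1 - P) = (1 : Matrix (Fin n) (Fin n) ℝ) := by abel
      rw [e3, mul_one, hHH]
    refine ⟨⟨c1, c2, c3, c4, c5⟩, by noncomm_ring, ?_, ?_⟩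
    · have e : Hᵀ * (H * P * Q + H * P * (1 - Q)) = (Hᵀ * H) * P := by noncomm_ring
      rw [e, hH, one_mul]
    · have e : Hᵀ * (H * P * Q + H * (1 - P) * Q) = (Hᵀ * H) * Q := by noncomm_ring
      rw [e, hH, one_mul]
end

section
/- Let 1 ≤ p < ∞ be a real number, let d, C ≥ 1, equip ℝ^d and ℝ^C with the ℓ_p norm, and let f : ℝ^d → ℝ^C be Lipschitz with constant l ≥ 0 with respect to these norms. Let x ∈ ℝ^d, let t be an index in {1,…,C}, and let ε ≥ 0. If f(x)_t − f(x)_i > 2^{(p−1)/p} · l · ε for every index i ≠ t, then for every Δx ∈ ℝ^d with ‖Δx‖_p ≤ ε and every index i ≠ t, it holds that f(x + Δx)_t > f(x + Δx)_i. -/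
theorem stmt19 (p : ℝ) (hp : 1 ≤ p) (d C : ℕ) (hd : 1 ≤ d) (hC : 1 ≤ C)
    (f : (Fin d → ℝ) → (Fin C → ℝ)) (l : ℝ) (hl : 0 ≤ l)
    (hf : ∀ u v : Fin d → ℝ,
      (∑ i, |f u i - f v i| ^ p) ^ (1 / p) ≤ l * (∑ i, |u i - v i| ^ p) ^ (1 / p))
    (x : Fin d → ℝ) (t : Fin C) (ε : ℝ) (hε : 0 ≤ ε)
    (hmargin : ∀ i, i ≠ t → (2 : ℝ) ^ ((p - 1) / p) * l * ε < f x t - f x i) :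
    ∀ Δx : Fin d → ℝ, (∑ i, |Δx i| ^ p) ^ (1 / p) ≤ ε →
      ∀ i, i ≠ t → f (x + Δx) i < f (x + Δx) t := by
  intro Δx hΔ i hit
  have hp0 : 0 < p := lt_of_lt_of_le one_pos hp
  set u := x + Δx with hu
  set A := |f u t - f x t| with hA
  set B := |f u i - f x i| with hB
  have hA0 : 0 ≤ A := abs_nonneg _
  have hB0 : 0 ≤ B := abs_nonneg _
  -- Lipschitz bound
  have hS : (∑ j, |f u j - f x j| ^ p) ^ (1 / p) ≤ l * ε := by
    have h1 := hf u x
    have h2 : (∑ j, |u j - x j| ^ p) ^ (1 / p) = (∑ j, |Δx j| ^ p) ^ (1 / p) := by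
      congr 1; apply Finset.sum_congr rfl; intro j _
      simp [hu, add_comm, add_sub_cancel_left]
    rw [h2] at h1
    exact h1.trans (mul_le_mul_of_nonneg_left hΔ hl)
  -- A^p + B^p bounded by the full sum
  have hsum : A ^ p + B ^ p ≤ ∑ j, |f u j - f x j| ^ p := by
    have : ∑ j ∈ ({t, i} : Finset (Fin C)), |f u j - f x j| ^ p
        ≤ ∑ j, |f u j - f x j| ^ p := by
      apply Finset.sum_le_sum_of_subset_of_nonneg (Finset.subset_univ _)
      intro j _ _
      exact Real.rpow_nonneg (abs_nonneg _) _
    rwa [Finset.sum_pair (Ne.symm hit)] at this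
  have hABp : (A ^ p + B ^ p) ^ (1 / p) ≤ l * ε := by
    refine le_trans ?_ hS
    apply Real.rpow_le_rpow (by positivity) hsum (by positivity)
  -- Power mean inequality: A + B ≤ 2^{(p-1)/p} (A^p + B^p)^{1/p}
  have hpm : A + B ≤ (2 : ℝ) ^ ((p - 1) / p) * (A ^ p + B ^ p) ^ (1 / p) := by
    have key : (A + B) ^ p ≤ (2 : ℝ) ^ (p - 1) * (A ^ p + B ^ p) := by
      have := NNReal.rpow_add_le_mul_rpow_add_rpow A.toNNReal B.toNNReal hp
      have h' := NNReal.coe_le_coe.2 this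
      push_cast at h'
      rwa [Real.coe_toNNReal _ hA0, Real.coe_toNNReal _ hB0] at h'
    calc A + B = ((A + B) ^ p) ^ (1 / p) := by
          rw [← Real.rpow_mul (by positivity), mul_one_div, div_self hp0.ne', Real.rpow_one]
      _ ≤ ((2 : ℝ) ^ (p - 1) * (A ^ p + B ^ p)) ^ (1 / p) :=
          Real.rpow_le_rpow (by positivity) key (by positivity)
      _ = (2 : ℝ) ^ ((p - 1) / p) * (A ^ p + B ^ p) ^ (1 / p) := by
          rw [Real.mul_rpow (by positivity) (by positivity),
            ← Real.rpow_mul (by norm_num), mul_one_div]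
  have hAB : A + B ≤ (2 : ℝ) ^ ((p - 1) / p) * (l * ε) := by
    refine hpm.trans ?_
    exact mul_le_mul_of_nonneg_left hABp (by positivity)
  have hm := hmargin i hit
  have h1 : -A ≤ f u t - f x t := neg_abs_le _
  have h2 : f u i - f x i ≤ B := le_abs_self _
  linarith
end
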